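/- Let w : ℝ → ℝ be twice differentiable and satisfy the Painlevé II equation w''(ξ) = ξ·w(ξ) + 2·w(ξ)³. Fix t < 0 and a nonzero constant α, and define for (y, x) ∈ ℝ²: ξ(x,y) = x·(−3t)^{−1/3} + y²·(−3t)^{−4/3}, p(y,x) = α·(−3t)^{−1/3}·exp(−xy/(3t) + 2y³/(27t²))·w(ξ(x,y)), and r(y,x) = −α^{−1}·(−3t)^{−1/3}·exp(xy/(3t) − 2y³/(27t²))·w(ξ(x,y)). Then p and r satisfy the scalar coupled nonlinear Schrödinger system with complex time: ∂_y p = ∂_x² p + 2 p² r and ∂_y r = −∂_x² r − 2 r² p. -/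

import Mathlib

lemma deriv_helper (u g q : ℝ → ℝ) (A G Q : ℝ) (z : ℝ) (hu : Differentiable ℝ u)
    (hg : HasDerivAt g G z) (hq : HasDerivAt q Q z) :
    HasDerivAt (fun s => A * Real.exp (g s) * u (q s))
      (A * Real.exp (g z) * (G * u (q z) + Q * deriv u (q z))) z := by
  have h1 : HasDerivAt (fun s => A * Real.exp (g s)) (A * (Real.exp (g z) * G)) z :=
    (hg.exp).const_mul A
  have h2 : HasDerivAt (fun s => u (q s)) (deriv u (q z) * Q) z :=
    ((hu (q z)).hasDerivAt).comp z hq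
  have h3 : HasDerivAt (fun s => A * Real.exp (g s) * u (q s))
      (A * (Real.exp (g z) * G) * u (q z) + A * Real.exp (g z) * (deriv u (q z) * Q)) z :=
    h1.mul h2
  convert h3 using 1
  ring

lemma deriv2_helper (w : ℝ → ℝ) (hw1 : Differentiable ℝ w) (hw2 : Differentiable ℝ (deriv w))
    (A : ℝ) (g : ℝ → ℝ) (G cc e x : ℝ) (hg : ∀ z, HasDerivAt g G z) :
    deriv (deriv (fun s => A * Real.exp (g s) * w (cc * s + e))) x
      = A * Real.exp (g x) * (G * G * w (cc * x + e) + 2 * G * cc * deriv w (cc * x + e)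
          + cc * cc * deriv (deriv w) (cc * x + e)) := by
  have hq : ∀ z : ℝ, HasDerivAt (fun s : ℝ => cc * s + e) cc z := fun z => by
    simpa using ((hasDerivAt_id z).const_mul cc).add_const e
  set u1 : ℝ → ℝ := fun s => G * w s + cc * deriv w s with hu1def
  have hu1 : Differentiable ℝ u1 := (hw1.const_mul G).add (hw2.const_mul cc)
  have hu1d : ∀ s, deriv u1 s = G * deriv w s + cc * deriv (deriv w) s := by
    intro s
    exact (((hw1 s).hasDerivAt.const_mul G).add ((hw2 s).hasDerivAt.const_mul cc)).deriv
  have h1 : deriv (fun s => A * Real.exp (g s) * w (cc * s + e))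
      = fun z => A * Real.exp (g z) * u1 (cc * z + e) := by
    funext z
    have := (deriv_helper w g (fun s => cc * s + e) A G cc z hw1 (hg z) (hq z)).deriv
    rw [this]
  rw [h1]
  have h2 := (deriv_helper u1 g (fun s => cc * s + e) A G cc x hu1 (hg x) (hq x)).deriv
  rw [h2, hu1d, hu1def]
  ring

/-- Self-similar Painlevé II solutions of the scalar coupled NLS system with complex time. -/
theorem stmt_2 (w : ℝ → ℝ)
    (hw1 : Differentiable ℝ w) (hw2 : Differentiable ℝ (deriv w))
    (hPII : ∀ s : ℝ, deriv (deriv w) s = s * w s + 2 * (w s) ^ 3)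
    (t : ℝ) (ht : t < 0) (α : ℝ) (hα : α ≠ 0)
    (ξ : ℝ → ℝ → ℝ)
    (hξ : ∀ x y : ℝ, ξ x y = x * (-3 * t) ^ (-(1 / 3 : ℝ)) + y ^ 2 * (-3 * t) ^ (-(4 / 3 : ℝ)))
    (p r : ℝ → ℝ → ℝ)
    (hp : ∀ y x : ℝ, p y x
        = α * (-3 * t) ^ (-(1 / 3 : ℝ)) * Real.exp (-(x * y) / (3 * t) + 2 * y ^ 3 / (27 * t ^ 2))
            * w (ξ x y))
    (hr : ∀ y x : ℝ, r y x
        = -α⁻¹ * (-3 * t) ^ (-(1 / 3 : ℝ)) * Real.exp ((x * y) / (3 * t) - 2 * y ^ 3 / (27 * t ^ 2))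
            * w (ξ x y)) :
    ∀ y x : ℝ,
      deriv (fun y' => p y' x) y
          = deriv (deriv (fun x' => p y x')) x + 2 * (p y x) ^ 2 * r y x
      ∧ deriv (fun y' => r y' x) y
          = -(deriv (deriv (fun x' => r y x')) x) - 2 * (r y x) ^ 2 * p y x := by
  intro y x
  have ht0 : t ≠ 0 := ne_of_lt ht
  have hA : (0:ℝ) < -3 * t := by linarith
  set c : ℝ := (-3 * t) ^ (-(1 / 3 : ℝ)) with hcdef
  set d : ℝ := (-3 * t) ^ (-(4 / 3 : ℝ)) with hddef
  -- algebraic facts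
  have hc3 : c ^ 3 = (-3 * t)⁻¹ := by
    rw [hcdef, ← Real.rpow_natCast ((-3 * t) ^ (-(1 / 3 : ℝ))) 3, ← Real.rpow_mul hA.le]
    norm_num [Real.rpow_neg_one]
  have hd4 : d = c ^ 4 := by
    rw [hcdef, hddef, ← Real.rpow_natCast ((-3 * t) ^ (-(1 / 3 : ℝ))) 4, ← Real.rpow_mul hA.le]
    norm_num
  have hc3t : c ^ 3 * (3 * t) = -1 := by
    rw [hc3]
    field_simp
  -- rewrite p and r as explicit functions
  have hpf : ∀ y' x' : ℝ, p y' x'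
      = α * c * Real.exp (-(x' * y') / (3 * t) + 2 * y' ^ 3 / (27 * t ^ 2))
          * w (c * x' + y' ^ 2 * d) := by
    intro y' x'
    rw [hp, hξ]; ring_nf
  have hrf : ∀ y' x' : ℝ, r y' x'
      = -α⁻¹ * c * Real.exp ((x' * y') / (3 * t) - 2 * y' ^ 3 / (27 * t ^ 2))
          * w (c * x' + y' ^ 2 * d) := by
    intro y' x'
    rw [hr, hξ]; ring_nf
  -- x-direction exponential derivatives
  have hgp : ∀ z : ℝ, HasDerivAt (fun s : ℝ => -(s * y) / (3 * t) + 2 * y ^ 3 / (27 * t ^ 2))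
      (-y / (3 * t)) z := by
    intro z
    have := (((hasDerivAt_id z).mul_const y).neg.div_const (3 * t)).add_const
      (2 * y ^ 3 / (27 * t ^ 2))
    simpa using this
  have hgr : ∀ z : ℝ, HasDerivAt (fun s : ℝ => (s * y) / (3 * t) - 2 * y ^ 3 / (27 * t ^ 2))
      (y / (3 * t)) z := by
    intro z
    have := (((hasDerivAt_id z).mul_const y).div_const (3 * t)).sub_const
      (2 * y ^ 3 / (27 * t ^ 2))
    simpa using this
  -- second x-derivatives
  have hpxx : deriv (deriv (fun x' => p y x')) x
      = α * c * Real.exp (-(x * y) / (3 * t) + 2 * y ^ 3 / (27 * t ^ 2))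
        * ((-y / (3 * t)) * (-y / (3 * t)) * w (c * x + y ^ 2 * d)
          + 2 * (-y / (3 * t)) * c * deriv w (c * x + y ^ 2 * d)
          + c * c * deriv (deriv w) (c * x + y ^ 2 * d)) := by
    have hfun : (fun x' => p y x')
        = fun x' => α * c * Real.exp (-(x' * y) / (3 * t) + 2 * y ^ 3 / (27 * t ^ 2))
            * w (c * x' + y ^ 2 * d) := funext fun x' => hpf y x'
    rw [hfun]
    exact deriv2_helper w hw1 hw2 (α * c) _ (-y / (3 * t)) c (y ^ 2 * d) x hgp
  have hrxx : deriv (deriv (fun x' => r y x')) x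
      = -α⁻¹ * c * Real.exp ((x * y) / (3 * t) - 2 * y ^ 3 / (27 * t ^ 2))
        * ((y / (3 * t)) * (y / (3 * t)) * w (c * x + y ^ 2 * d)
          + 2 * (y / (3 * t)) * c * deriv w (c * x + y ^ 2 * d)
          + c * c * deriv (deriv w) (c * x + y ^ 2 * d)) := by
    have hfun : (fun x' => r y x')
        = fun x' => -α⁻¹ * c * Real.exp ((x' * y) / (3 * t) - 2 * y ^ 3 / (27 * t ^ 2))
            * w (c * x' + y ^ 2 * d) := funext fun x' => hrf y x'
    rw [hfun]
    exact deriv2_helper w hw1 hw2 (-α⁻¹ * c) _ (y / (3 * t)) c (y ^ 2 * d) x hgr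
  -- y-direction derivatives
  have hqy : HasDerivAt (fun y' : ℝ => c * x + y' ^ 2 * d) (2 * y * d) y := by
    have := ((hasDerivAt_pow 2 y).mul_const d).const_add (c * x)
    simpa using this
  have hg2p : HasDerivAt (fun y' : ℝ => -(x * y') / (3 * t) + 2 * y' ^ 3 / (27 * t ^ 2))
      (-x / (3 * t) + 6 * y ^ 2 / (27 * t ^ 2)) y := by
    have h1 : HasDerivAt (fun y' : ℝ => -(x * y') / (3 * t)) (-x / (3 * t)) y := by
      simpa using (((hasDerivAt_id y).const_mul x).neg.div_const (3 * t))
    have h2 : HasDerivAt (fun y' : ℝ => 2 * y' ^ 3 / (27 * t ^ 2)) (6 * y ^ 2 / (27 * t ^ 2)) y := by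
      have := ((hasDerivAt_pow 3 y).const_mul 2).div_const (27 * t ^ 2)
      refine this.congr_deriv ?_
      push_cast; ring
    exact h1.add h2
  have hg2r : HasDerivAt (fun y' : ℝ => (x * y') / (3 * t) - 2 * y' ^ 3 / (27 * t ^ 2))
      (x / (3 * t) - 6 * y ^ 2 / (27 * t ^ 2)) y := by
    have h1 : HasDerivAt (fun y' : ℝ => (x * y') / (3 * t)) (x / (3 * t)) y := by
      simpa using (((hasDerivAt_id y).const_mul x).div_const (3 * t))
    have h2 : HasDerivAt (fun y' : ℝ => 2 * y' ^ 3 / (27 * t ^ 2)) (6 * y ^ 2 / (27 * t ^ 2)) y := by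
      have := ((hasDerivAt_pow 3 y).const_mul 2).div_const (27 * t ^ 2)
      refine this.congr_deriv ?_
      push_cast; ring
    exact h1.sub h2
  have hpy : deriv (fun y' => p y' x) y
      = α * c * Real.exp (-(x * y) / (3 * t) + 2 * y ^ 3 / (27 * t ^ 2))
        * ((-x / (3 * t) + 6 * y ^ 2 / (27 * t ^ 2)) * w (c * x + y ^ 2 * d)
          + 2 * y * d * deriv w (c * x + y ^ 2 * d)) := by
    have hfun : (fun y' => p y' x)
        = fun y' => α * c * Real.exp (-(x * y') / (3 * t) + 2 * y' ^ 3 / (27 * t ^ 2))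
            * w (c * x + y' ^ 2 * d) := funext fun y' => hpf y' x
    rw [hfun]
    exact (deriv_helper w _ _ (α * c) _ (2 * y * d) y hw1 hg2p hqy).deriv
  have hry : deriv (fun y' => r y' x) y
      = -α⁻¹ * c * Real.exp ((x * y) / (3 * t) - 2 * y ^ 3 / (27 * t ^ 2))
        * ((x / (3 * t) - 6 * y ^ 2 / (27 * t ^ 2)) * w (c * x + y ^ 2 * d)
          + 2 * y * d * deriv w (c * x + y ^ 2 * d)) := by
    have hfun : (fun y' => r y' x)
        = fun y' => -α⁻¹ * c * Real.exp ((x * y') / (3 * t) - 2 * y' ^ 3 / (27 * t ^ 2))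
            * w (c * x + y' ^ 2 * d) := funext fun y' => hrf y' x
    rw [hfun]
    exact (deriv_helper w _ _ (-α⁻¹ * c) _ (2 * y * d) y hw1 hg2r hqy).deriv
  -- rewrite division coefficients in terms of c
  have h3t : (3:ℝ) * t ≠ 0 := by
    intro h; apply ht0; linarith [h]
  have hinv : (3 * t)⁻¹ = -c ^ 3 := by
    rw [hc3]
    field_simp
  have e1 : -y / (3 * t) = y * c ^ 3 := by
    rw [div_eq_mul_inv, hinv]; ring
  have e2 : y / (3 * t) = -(y * c ^ 3) := by
    rw [div_eq_mul_inv, hinv]; ring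
  have e3 : -x / (3 * t) = x * c ^ 3 := by
    rw [div_eq_mul_inv, hinv]; ring
  have e4 : x / (3 * t) = -(x * c ^ 3) := by
    rw [div_eq_mul_inv, hinv]; ring
  have e5 : 6 * y ^ 2 / (27 * t ^ 2) = 2 * y ^ 2 * c ^ 6 := by
    have h9 : (27:ℝ) * t ^ 2 = 3 * ((3 * t) * (3 * t)) := by ring
    rw [h9, div_eq_mul_inv, mul_inv, mul_inv, hinv]
    field_simp
    ring
  have hPII0 : deriv (deriv w) (c * x + y ^ 2 * d)
      = (c * x + y ^ 2 * d) * w (c * x + y ^ 2 * d) + 2 * (w (c * x + y ^ 2 * d)) ^ 3 :=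
    hPII _
  have hE : Real.exp (-(x * y) / (3 * t) + 2 * y ^ 3 / (27 * t ^ 2))
      * Real.exp ((x * y) / (3 * t) - 2 * y ^ 3 / (27 * t ^ 2)) = 1 := by
    rw [← Real.exp_add, show -(x * y) / (3 * t) + 2 * y ^ 3 / (27 * t ^ 2)
        + ((x * y) / (3 * t) - 2 * y ^ 3 / (27 * t ^ 2)) = 0 by ring, Real.exp_zero]
  rw [hpy, hpxx, hry, hrxx, hpf y x, hrf y x, hPII0, e1, e2, e3, e4, e5]
  set W : ℝ := w (c * x + y ^ 2 * d) with hW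
  set W' : ℝ := deriv w (c * x + y ^ 2 * d) with hW'
  set Ep : ℝ := Real.exp (-(x * y) / (3 * t) + 2 * y ^ 3 / (27 * t ^ 2)) with hEp
  set Er : ℝ := Real.exp ((x * y) / (3 * t) - 2 * y ^ 3 / (27 * t ^ 2)) with hEr
  have hαinv : α * α⁻¹ = 1 := mul_inv_cancel₀ hα
  constructor
  · linear_combination (α * c * Ep * (2 * y * W' - c ^ 2 * y ^ 2 * W)) * hd4
      + (2 * α * c ^ 3 * Ep * W ^ 3) * hE + (2 * α * c ^ 3 * Ep ^ 2 * Er * W ^ 3) * hαinv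
  · linear_combination (α⁻¹ * c * Er * (-(c ^ 2 * y ^ 2 * W) - 2 * y * W')) * hd4
      + (2 * α⁻¹ * c ^ 3 * Er * W ^ 3) * hE + (2 * α⁻¹ * c ^ 3 * Er ^ 2 * Ep * W ^ 3) * hαinv
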